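/- arXiv:0804.3202 — 3 statements merged into one kernel-verified Lean document; each statement's English description precedes it below -/
import Mathlib

section
/- Let H₀ be a self-adjoint operator on a finite-dimensional complex Hilbert space, φ a unit vector, H_ω = H₀ + ω·Π_φ for ω ∈ ℝ. For z = E + iε with ε > 0, the Lebesgue integral over ω ∈ ℝ of Im ⟨φ, (H_ω − z)⁻¹ φ⟩ equals π. -/
open Matrix MeasureTheory

section Aux

variable {n : Type*} [Fintype n] [DecidableEq n]

omit [DecidableEq n] in
lemma aux_dot_star_self (v : n → ℂ) :
    star v ⬝ᵥ v = ((∑ i, Complex.normSq (v i) : ℝ) : ℂ) := by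
  simp [dotProduct, Complex.normSq_eq_conj_mul_self]

omit [DecidableEq n] in
lemma aux_herm_quad_real (B : Matrix n n ℂ) (hB : B.IsHermitian) (v : n → ℂ) :
    (star v ⬝ᵥ (B *ᵥ v)).im = 0 := by
  have h : star (star v ⬝ᵥ (B *ᵥ v)) = star v ⬝ᵥ (B *ᵥ v) := by
    have h1 : star (star v ⬝ᵥ (B *ᵥ v)) = star (B *ᵥ v) ⬝ᵥ v := by
      rw [star_dotProduct]; simp
    rw [h1, star_mulVec, hB.eq, ← dotProduct_mulVec]
  have := congrArg Complex.im h
  simp only [Complex.star_def, Complex.conj_im] at this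
  linarith

lemma aux_hermitian_sub_unit (B : Matrix n n ℂ) (hB : B.IsHermitian) (z : ℂ)
    (hz : z.im ≠ 0) : IsUnit (B - z • (1 : Matrix n n ℂ)) := by
  rw [← Matrix.mulVec_injective_iff_isUnit]
  intro x y hxy
  have h0 : (B - z • 1) *ᵥ (x - y) = 0 := by
    rw [Matrix.mulVec_sub, hxy, sub_self]
  set v := x - y with hv
  have hBv : B *ᵥ v = z • v := by
    have := h0
    rw [Matrix.sub_mulVec, sub_eq_zero, Matrix.smul_mulVec, Matrix.one_mulVec] at this
    exact this
  have hq : (star v ⬝ᵥ (B *ᵥ v)).im = 0 := aux_herm_quad_real B hB v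
  rw [hBv, dotProduct_smul, smul_eq_mul, aux_dot_star_self, Complex.mul_im] at hq
  simp only [Complex.ofReal_re, Complex.ofReal_im, mul_zero, add_zero, zero_add] at hq
  have hs : (∑ i, Complex.normSq (v i) : ℝ) = 0 := by
    rcases mul_eq_zero.mp hq with h | h
    · exact absurd h hz
    · exact h
  have hv0 : v = 0 := by
    funext i
    exact Complex.normSq_eq_zero.mp <|
      (Finset.sum_eq_zero_iff_of_nonneg fun i _ => Complex.normSq_nonneg (v i)).mp hs i
        (Finset.mem_univ i)
  exact sub_eq_zero.mp hv0

omit [DecidableEq n] in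
lemma aux_vecMulVec_mulVec (w v u : n → ℂ) :
    vecMulVec w v *ᵥ u = (v ⬝ᵥ u) • w := by
  funext i
  simp only [mulVec, vecMulVec_apply, dotProduct, Pi.smul_apply, smul_eq_mul]
  rw [Finset.sum_mul]
  exact Finset.sum_congr rfl fun j _ => by ring

end Aux

lemma aux_lorentzian_integral (a b : ℝ) (hb : 0 < b) :
    ∫ x : ℝ, b / ((x + a) ^ 2 + b ^ 2) = Real.pi := by
  have h1 : ∫ x : ℝ, b / ((x + a) ^ 2 + b ^ 2) = ∫ x : ℝ, b / (x ^ 2 + b ^ 2) :=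
    integral_add_right_eq_self (fun x => b / (x ^ 2 + b ^ 2)) a
  rw [h1]
  have h2 : ∀ x : ℝ, b / (x ^ 2 + b ^ 2) = b⁻¹ * (1 + (b⁻¹ * x) ^ 2)⁻¹ := by
    intro x
    have hx : (0:ℝ) < x ^ 2 + b ^ 2 := by positivity
    field_simp
    ring
  simp only [h2]
  rw [integral_const_mul, MeasureTheory.Measure.integral_comp_inv_mul_left
    (fun y => (1 + y ^ 2)⁻¹) b, integral_univ_inv_one_add_sq]
  rw [abs_of_pos hb, smul_eq_mul]
  field_simp

/-- The Lebesgue integral over the coupling constant `ω` of the imaginary part of the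
diagonal matrix element of the resolvent of the rank-one perturbation `H_ω = H₀ + ω Π_φ`
at `z = E + iε`, `ε > 0`, equals `π`. -/
theorem integral_im_resolvent_eq_pi {n : Type*} [Fintype n] [DecidableEq n]
    (H₀ : Matrix n n ℂ) (hH₀ : H₀.IsHermitian)
    (φ : n → ℂ) (hφ : star φ ⬝ᵥ φ = 1)
    (E ε : ℝ) (hε : 0 < ε) :
    ∫ ω : ℝ,
        (star φ ⬝ᵥ (((H₀ + (ω : ℂ) • vecMulVec φ (star φ))
          - ((E : ℂ) + (ε : ℂ) * Complex.I) • (1 : Matrix n n ℂ))⁻¹ *ᵥ φ)).im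
      = Real.pi := by
  set z : ℂ := (E : ℂ) + (ε : ℂ) * Complex.I with hzdef
  have hzim : z.im = ε := by simp [hzdef]
  have hzim' : z.im ≠ 0 := by rw [hzim]; exact hε.ne'
  -- the unperturbed resolvent
  set A : Matrix n n ℂ := H₀ - z • 1 with hAdef
  have hA : IsUnit A := aux_hermitian_sub_unit H₀ hH₀ z hzim'
  set u : n → ℂ := A⁻¹ *ᵥ φ with hudef
  have hAu : A *ᵥ u = φ := by
    rw [hudef, Matrix.mulVec_mulVec, Matrix.mul_nonsing_inv _ (A.isUnit_iff_isUnit_det.mp hA),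
      Matrix.one_mulVec]
  have hφ0 : φ ≠ 0 := by
    intro h; rw [h] at hφ; simp at hφ
  have hu0 : u ≠ 0 := by
    intro h; rw [h, Matrix.mulVec_zero] at hAu; exact hφ0 hAu.symm
  set g : ℂ := star φ ⬝ᵥ u with hgdef
  -- imaginary part of g is positive
  have hgim : g.im = ε * ∑ i, Complex.normSq (u i) := by
    have h1 : g = star u ⬝ᵥ (Aᴴ *ᵥ u) := by
      rw [hgdef, ← hAu, star_mulVec, ← dotProduct_mulVec]
    have hAH : Aᴴ = H₀ - (starRingEnd ℂ z) • (1 : Matrix n n ℂ) := by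
      rw [hAdef, conjTranspose_sub, conjTranspose_smul, conjTranspose_one, hH₀.eq]
      rfl
    rw [h1, hAH, Matrix.sub_mulVec, dotProduct_sub, Matrix.smul_mulVec,
      Matrix.one_mulVec, dotProduct_smul, smul_eq_mul, aux_dot_star_self]
    rw [Complex.sub_im, aux_herm_quad_real H₀ hH₀ u, Complex.mul_im]
    simp only [Complex.conj_re, Complex.conj_im, Complex.ofReal_re, Complex.ofReal_im,
      mul_zero, zero_add, zero_sub, hzim]
    ring
  have hspos : 0 < ∑ i, Complex.normSq (u i) := by
    rcases Function.ne_iff.mp hu0 with ⟨i, hi⟩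
    exact Finset.sum_pos' (fun j _ => Complex.normSq_nonneg _)
      ⟨i, Finset.mem_univ i, Complex.normSq_pos.mpr hi⟩
  have hgimpos : 0 < g.im := by rw [hgim]; positivity
  have hg0 : g ≠ 0 := by
    intro h; rw [h] at hgimpos; simp at hgimpos
  set a : ℝ := (g⁻¹).re with hadef
  set b : ℝ := -(g⁻¹).im with hbdef
  have hbpos : 0 < b := by
    rw [hbdef, Complex.inv_im, neg_div, neg_neg]
    exact div_pos hgimpos (Complex.normSq_pos.mpr hg0)
  -- pointwise formula for the integrand
  have key : ∀ ω : ℝ,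
      (star φ ⬝ᵥ (((H₀ + (ω : ℂ) • vecMulVec φ (star φ)) - z • (1 : Matrix n n ℂ))⁻¹ *ᵥ φ)).im
        = b / ((ω + a) ^ 2 + b ^ 2) := by
    intro ω
    set M : Matrix n n ℂ := (H₀ + (ω : ℂ) • vecMulVec φ (star φ)) - z • 1 with hMdef
    have hP : (vecMulVec φ (star φ)).IsHermitian := by
      unfold Matrix.IsHermitian
      funext i j
      simp [vecMulVec_apply, conjTranspose_apply, mul_comm]
    have hBH : (H₀ + (ω : ℂ) • vecMulVec φ (star φ)).IsHermitian := by
      apply hH₀.add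
      unfold Matrix.IsHermitian
      rw [conjTranspose_smul, hP.eq]
      congr 1
      simp
    have hM : IsUnit M := aux_hermitian_sub_unit _ hBH z hzim'
    set c : ℂ := 1 + (ω : ℂ) * g with hcdef
    have hcim : c.im = ω * g.im := by
      rw [hcdef]; simp [Complex.add_im, Complex.mul_im]
    have hc0 : c ≠ 0 := by
      intro h
      have h1 := congrArg Complex.im h
      rw [hcim, Complex.zero_im] at h1
      rcases mul_eq_zero.mp h1 with h2 | h2
      · rw [hcdef, h2] at h
        simp at h
      · exact hgimpos.ne' h2
    have hMu : M *ᵥ u = c • φ := by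
      rw [hMdef, Matrix.sub_mulVec, Matrix.add_mulVec, Matrix.smul_mulVec,
        aux_vecMulVec_mulVec, ← hgdef, Matrix.smul_mulVec, Matrix.one_mulVec]
      have hAu' : H₀ *ᵥ u - z • u = φ := by
        rw [← hAu, hAdef, Matrix.sub_mulVec, Matrix.smul_mulVec, Matrix.one_mulVec]
      have hre : H₀ *ᵥ u + (ω : ℂ) • g • φ - z • u
          = (H₀ *ᵥ u - z • u) + ((ω : ℂ) * g) • φ := by
        rw [smul_smul]; abel
      rw [hre, hAu', hcdef, add_smul, one_smul]
    have hMinv : M⁻¹ *ᵥ φ = c⁻¹ • u := by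
      have h1 : M⁻¹ *ᵥ (M *ᵥ u) = u := by
        rw [Matrix.mulVec_mulVec, Matrix.nonsing_inv_mul _ (M.isUnit_iff_isUnit_det.mp hM),
          Matrix.one_mulVec]
      rw [hMu, Matrix.mulVec_smul] at h1
      rw [← h1, smul_smul, inv_mul_cancel₀ hc0, one_smul]
    have hval : star φ ⬝ᵥ (M⁻¹ *ᵥ φ) = ((ω : ℂ) + g⁻¹)⁻¹ := by
      rw [hMinv, dotProduct_smul, smul_eq_mul, ← hgdef]
      have h2 : (ω : ℂ) + g⁻¹ = c * g⁻¹ := by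
        rw [hcdef]; field_simp; ring
      rw [h2, mul_inv, inv_inv, mul_comm]
    rw [hval]
    have him : ((ω : ℂ) + g⁻¹).im = -b := by simp [hbdef]
    have hre : ((ω : ℂ) + g⁻¹).re = ω + a := by simp [hadef]
    rw [Complex.inv_im, Complex.normSq_apply, him, hre, neg_neg]
    ring_nf
  simp only [key]
  exact aux_lorentzian_integral a b hbpos
end

section
/- Let H₀ be a self-adjoint operator on a finite-dimensional Hilbert space H, φ ∈ H with ‖φ‖ = 1, and H_s = H₀ + s Π_φ. Then for all real a < b and all 0 ≤ s ≤ t: tr χ_{(a,b]}(H_s) ≤ 1 + tr χ_{(a,b]}(H_t). -/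
open Matrix MeasureTheory

/-- The spectral projection `χ_I(A)` of a Hermitian matrix `A` onto a Borel set `I ⊆ ℝ`. -/
noncomputable def specProj {n : Type*} [Fintype n] [DecidableEq n]
    (A : Matrix n n ℂ) (I : Set ℝ) : Matrix n n ℂ :=
  if h : A.IsHermitian then h.cfc (Set.indicator I 1) else 0

namespace RankOneAux

open Module Submodule Finset

variable {n : Type*} [Fintype n] [DecidableEq n]

noncomputable def quad (A : Matrix n n ℂ) (v : EuclideanSpace ℂ n) : ℝ :=
  (inner ℂ v (Matrix.toEuclideanLin A v) : ℂ).re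

lemma eigen_apply (A : Matrix n n ℂ) (hA : A.IsHermitian) (j : n) :
    Matrix.toEuclideanLin A (hA.eigenvectorBasis j)
      = (hA.eigenvalues j : ℂ) • hA.eigenvectorBasis j := by
  have := hA.mulVec_eigenvectorBasis j
  apply (WithLp.equiv 2 (n → ℂ)).injective
  ext i
  simp [Matrix.toEuclideanLin_apply, this]

lemma repr_toEuclideanLin (A : Matrix n n ℂ) (hA : A.IsHermitian) (v : EuclideanSpace ℂ n)
    (i : n) :
    hA.eigenvectorBasis.repr (Matrix.toEuclideanLin A v) i
      = (hA.eigenvalues i : ℂ) * hA.eigenvectorBasis.repr v i := by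
  set b := hA.eigenvectorBasis
  conv_lhs => rw [← b.sum_repr v]
  rw [map_sum, map_sum]
  simp only [_root_.map_smul, b, eigen_apply A hA, RCLike.real_smul_eq_coe_smul (K := ℂ), OrthonormalBasis.repr_self]
  rw [WithLp.ofLp_sum, Finset.sum_apply]
  rw [Finset.sum_eq_single i]
  · simp [mul_comm]
  · intro j _ hj; simp [EuclideanSpace.single_apply, Ne.symm hj]
  · simp

lemma quad_eq (A : Matrix n n ℂ) (hA : A.IsHermitian) (v : EuclideanSpace ℂ n) :
    quad A v = ∑ i, hA.eigenvalues i * ‖hA.eigenvectorBasis.repr v i‖ ^ 2 := by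
  set b := hA.eigenvectorBasis
  have h1 : (inner ℂ v (Matrix.toEuclideanLin A v) : ℂ)
      = inner ℂ (b.repr v) (b.repr (Matrix.toEuclideanLin A v)) :=
    (b.repr.inner_map_map v _).symm
  rw [quad, h1, PiLp.inner_apply]
  simp only [RCLike.inner_apply', b, repr_toEuclideanLin A hA]
  rw [Complex.re_sum]
  congr 1; ext i
  have : (starRingEnd ℂ) (b.repr v i) * ((hA.eigenvalues i : ℂ) * b.repr v i)
      = (hA.eigenvalues i : ℂ) * ((starRingEnd ℂ) (b.repr v i) * b.repr v i) := by ring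
  rw [this, Complex.conj_mul', ← Complex.ofReal_pow, ← Complex.ofReal_mul,
    Complex.ofReal_re]

lemma norm_sq_eq (A : Matrix n n ℂ) (hA : A.IsHermitian) (v : EuclideanSpace ℂ n) :
    ‖v‖ ^ 2 = ∑ i, ‖hA.eigenvectorBasis.repr v i‖ ^ 2 := by
  rw [← hA.eigenvectorBasis.repr.norm_map v, EuclideanSpace.norm_eq,
    Real.sq_sqrt (by positivity)]

/-- span of eigenvectors with eigenvalue ≤ x -/
noncomputable def Ele {A : Matrix n n ℂ} (hA : A.IsHermitian) (x : ℝ) :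
    Submodule ℂ (EuclideanSpace ℂ n) :=
  span ℂ (⇑hA.eigenvectorBasis '' {i | hA.eigenvalues i ≤ x})

/-- span of eigenvectors with eigenvalue > x -/
noncomputable def Egt {A : Matrix n n ℂ} (hA : A.IsHermitian) (x : ℝ) :
    Submodule ℂ (EuclideanSpace ℂ n) :=
  span ℂ (⇑hA.eigenvectorBasis '' {i | x < hA.eigenvalues i})

lemma repr_zero_of_mem_span (b : OrthonormalBasis n ℂ (EuclideanSpace ℂ n)) (S : Set n)
    {v : EuclideanSpace ℂ n} (hv : v ∈ span ℂ (⇑b '' S)) {i : n} (hi : i ∉ S) :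
    b.repr v i = 0 := by
  rw [← b.coe_toBasis] at hv
  rw [Basis.mem_span_image] at hv
  rw [← b.coe_toBasis_repr_apply]
  by_contra h
  exact hi (hv (Finsupp.mem_support_iff.mpr h))

lemma finrank_span_basis_image (b : OrthonormalBasis n ℂ (EuclideanSpace ℂ n)) (S : Set n) :
    finrank ℂ (span ℂ (⇑b '' S)) = Nat.card S := by
  classical
  haveI : Fintype S := Fintype.ofFinite S
  have hli : LinearIndependent ℂ (fun i : S => b i) := by
    have := b.toBasis.linearIndependent.comp ((↑) : S → n) Subtype.val_injective
    exact this
  have hrange : Set.range (fun i : S => b i) = ⇑b '' S := by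
    ext v; simp [Set.mem_image]
  rw [Nat.card_eq_fintype_card, ← finrank_span_eq_card hli, hrange]

lemma quad_le_of_mem {A : Matrix n n ℂ} (hA : A.IsHermitian) (x : ℝ)
    {v : EuclideanSpace ℂ n} (hv : v ∈ Ele hA x) :
    quad A v ≤ x * ‖v‖ ^ 2 := by
  rw [quad_eq A hA, norm_sq_eq A hA, Finset.mul_sum]
  apply Finset.sum_le_sum
  intro i _
  by_cases h : hA.eigenvectorBasis.repr v i = 0
  · simp [h]
  · have hi : hA.eigenvalues i ≤ x := by
      by_contra hx
      exact h (repr_zero_of_mem_span _ _ hv hx)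
    exact mul_le_mul_of_nonneg_right hi (by positivity)

lemma lt_quad_of_mem {A : Matrix n n ℂ} (hA : A.IsHermitian) (x : ℝ)
    {v : EuclideanSpace ℂ n} (hv : v ∈ Egt hA x) (hv0 : v ≠ 0) :
    x * ‖v‖ ^ 2 < quad A v := by
  rw [quad_eq A hA, norm_sq_eq A hA, Finset.mul_sum, ← sub_pos, ← Finset.sum_sub_distrib]
  apply Finset.sum_pos'
  · intro i _
    by_cases h : hA.eigenvectorBasis.repr v i = 0
    · simp [h]
    · have hi : x < hA.eigenvalues i := by
        by_contra hx
        exact h (repr_zero_of_mem_span _ _ hv hx)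
      nlinarith [sq_nonneg ‖hA.eigenvectorBasis.repr v i‖,
        norm_pos_iff.mpr h]
  · have : hA.eigenvectorBasis.repr v ≠ 0 := by
      intro h
      exact hv0 (by simpa using congrArg hA.eigenvectorBasis.repr.symm h)
    obtain ⟨i, hi⟩ : ∃ i, hA.eigenvectorBasis.repr v i ≠ 0 := by
      by_contra h
      push_neg at h
      exact this (by ext i; simpa using h i)
    refine ⟨i, Finset.mem_univ i, ?_⟩
    have hx : x < hA.eigenvalues i := by
      by_contra hx
      exact hi (repr_zero_of_mem_span _ _ hv hx)
    have : 0 < ‖hA.eigenvectorBasis.repr v i‖ ^ 2 := pow_pos (norm_pos_iff.mpr hi) 2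
    nlinarith

/-- counting functions -/
noncomputable def ecount {A : Matrix n n ℂ} (hA : A.IsHermitian) (x : ℝ) : ℕ :=
  Nat.card {i // hA.eigenvalues i ≤ x}

noncomputable def gcount {A : Matrix n n ℂ} (hA : A.IsHermitian) (x : ℝ) : ℕ :=
  Nat.card {i // x < hA.eigenvalues i}

noncomputable def icount {A : Matrix n n ℂ} (hA : A.IsHermitian) (a b : ℝ) : ℕ :=
  Nat.card {i // hA.eigenvalues i ∈ Set.Ioc a b}

lemma finrank_Ele {A : Matrix n n ℂ} (hA : A.IsHermitian) (x : ℝ) :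
    finrank ℂ (Ele hA x) = ecount hA x :=
  finrank_span_basis_image _ _

lemma finrank_Egt {A : Matrix n n ℂ} (hA : A.IsHermitian) (x : ℝ) :
    finrank ℂ (Egt hA x) = gcount hA x :=
  finrank_span_basis_image _ _

lemma ecount_add_gcount {A : Matrix n n ℂ} (hA : A.IsHermitian) (x : ℝ) :
    ecount hA x + gcount hA x = Fintype.card n := by
  classical
  rw [ecount, gcount, Nat.card_eq_fintype_card, Nat.card_eq_fintype_card,
    Fintype.card_subtype, Fintype.card_subtype]
  have : (Finset.univ.filter fun i => x < hA.eigenvalues i)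
      = (Finset.univ.filter fun i => ¬ hA.eigenvalues i ≤ x) := by
    ext i
    simp only [Finset.mem_filter, Finset.mem_univ, true_and, not_le]
  rw [this]
  exact Finset.card_filter_add_card_filter_not
    (p := fun i => hA.eigenvalues i ≤ x)

lemma icount_add_ecount {A : Matrix n n ℂ} (hA : A.IsHermitian) {a b : ℝ} (hab : a ≤ b) :
    icount hA a b + ecount hA a = ecount hA b := by
  classical
  rw [icount, ecount, ecount, Nat.card_eq_fintype_card, Nat.card_eq_fintype_card,
    Nat.card_eq_fintype_card, Fintype.card_subtype, Fintype.card_subtype,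
    Fintype.card_subtype]
  have h1 : (Finset.univ.filter fun i => hA.eigenvalues i ∈ Set.Ioc a b)
      = (Finset.univ.filter fun i => hA.eigenvalues i ≤ b).filter
          fun i => ¬ hA.eigenvalues i ≤ a := by
    rw [Finset.filter_filter]
    ext i
    simp only [Finset.mem_filter, Finset.mem_univ, true_and, Set.mem_Ioc, not_le]
    tauto
  have h2 : (Finset.univ.filter fun i => hA.eigenvalues i ≤ a)
      = (Finset.univ.filter fun i => hA.eigenvalues i ≤ b).filter
          fun i => hA.eigenvalues i ≤ a := by
    rw [Finset.filter_filter]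
    ext i
    simp only [Finset.mem_filter, Finset.mem_univ, true_and]
    constructor
    · exact fun h => ⟨h.trans hab, h⟩
    · exact fun h => h.2
  rw [h1, h2, add_comm]
  exact Finset.card_filter_add_card_filter_not
    (p := fun i => hA.eigenvalues i ≤ a)

lemma disjoint_finrank (V W : Submodule ℂ (EuclideanSpace ℂ n)) (h : V ⊓ W = ⊥) :
    finrank ℂ V + finrank ℂ W ≤ Fintype.card n := by
  have := Submodule.finrank_sup_add_finrank_inf_eq V W
  rw [h, finrank_bot, add_zero] at this
  rw [← this]
  have := Submodule.finrank_le (V ⊔ W)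
  simpa using this

/-- monotonicity of counting function under quadratic form domination -/
lemma ecount_mono {A B : Matrix n n ℂ} (hA : A.IsHermitian) (hB : B.IsHermitian)
    (hq : ∀ v, quad A v ≤ quad B v) (x : ℝ) :
    ecount hB x ≤ ecount hA x := by
  have hd : Ele hB x ⊓ Egt hA x = ⊥ := by
    rw [eq_bot_iff]
    rintro v ⟨hv1, hv2⟩
    by_contra hv0
    have h1 := quad_le_of_mem hB x hv1
    have h2 := lt_quad_of_mem hA x hv2 (by simpa using hv0)
    have := hq v
    simp only [Submodule.mem_bot] at *
    linarith
  have hle := disjoint_finrank _ _ hd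
  rw [finrank_Ele, finrank_Egt] at hle
  have := ecount_add_gcount hA x
  omega

/-- rank-one defect of counting function -/
lemma ecount_le_rankone {A B : Matrix n n ℂ} (hA : A.IsHermitian) (hB : B.IsHermitian)
    (f : EuclideanSpace ℂ n →ₗ[ℂ] ℂ)
    (hq : ∀ v, f v = 0 → quad A v = quad B v) (x : ℝ) :
    ecount hA x ≤ ecount hB x + 1 := by
  have hd : Ele hA x ⊓ (Egt hB x ⊓ LinearMap.ker f) = ⊥ := by
    rw [eq_bot_iff]
    rintro v ⟨hv1, hv2, hv3⟩
    by_contra hv0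
    have h1 := quad_le_of_mem hA x hv1
    have h2 := lt_quad_of_mem hB x hv2 (by simpa using hv0)
    have h3 := hq v (LinearMap.mem_ker.mp hv3)
    simp only [Submodule.mem_bot] at *
    linarith
  have hle := disjoint_finrank _ _ hd
  rw [finrank_Ele] at hle
  -- finrank V ≥ finrank Egt + finrank ker f - card n
  have hsup := Submodule.finrank_sup_add_finrank_inf_eq (Egt hB x) (LinearMap.ker f)
  have hsup_le : finrank ℂ ↥(Egt hB x ⊔ LinearMap.ker f) ≤ Fintype.card n := by
    have := Submodule.finrank_le (Egt hB x ⊔ LinearMap.ker f)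
    simpa using this
  have hker : finrank ℂ (LinearMap.ker f) + 1 ≥ Fintype.card n := by
    have h1 := LinearMap.finrank_range_add_finrank_ker f
    have h2 : finrank ℂ (LinearMap.range f) ≤ 1 := by
      have := Submodule.finrank_le (LinearMap.range f)
      simpa using this
    have h3 : finrank ℂ (EuclideanSpace ℂ n) = Fintype.card n := by simp
    omega
  have hEgt := finrank_Egt hB x
  have hcnt := ecount_add_gcount hB x
  omega

lemma quad_add_rankone (A : Matrix n n ℂ) (φ : n → ℂ) (c : ℝ) (v : EuclideanSpace ℂ n) :
    quad (A + (c : ℂ) • vecMulVec φ (star φ)) v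
      = quad A v + c * ‖star φ ⬝ᵥ (WithLp.equiv 2 (n → ℂ)) v‖ ^ 2 := by
  set d : ℂ := star φ ⬝ᵥ (WithLp.equiv 2 (n → ℂ)) v with hd
  have key : (inner ℂ v (Matrix.toEuclideanLin ((c : ℂ) • vecMulVec φ (star φ)) v) : ℂ)
      = (c : ℂ) * ((starRingEnd ℂ) d * d) := by
    rw [Matrix.toEuclideanLin_apply, PiLp.inner_apply]
    simp only [RCLike.inner_apply']
    have hmv : ∀ i, (((c : ℂ) • vecMulVec φ (star φ)) *ᵥ (WithLp.equiv 2 (n → ℂ)) v) i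
        = (c : ℂ) * (φ i * d) := by
      intro i
      simp only [smul_mulVec, Pi.smul_apply, smul_eq_mul, mulVec, dotProduct,
        vecMulVec_apply, hd, Pi.star_apply]
      simp only [Finset.mul_sum]
      exact Finset.sum_congr rfl fun j _ => by
        simp [Matrix.smul_apply, vecMulVec_apply, smul_eq_mul]; ring
    calc ∑ i, (starRingEnd ℂ) (v i) *
          ((WithLp.equiv 2 (n → ℂ)).symm (((c : ℂ) • vecMulVec φ (star φ)) *ᵥ
            (WithLp.equiv 2 (n → ℂ)) v) i)
        = ∑ i, (c : ℂ) * (((starRingEnd ℂ) (v i) * φ i) * d) := by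
          refine Finset.sum_congr rfl fun i _ => ?_
          rw [show ((WithLp.equiv 2 (n → ℂ)).symm (((c : ℂ) • vecMulVec φ (star φ)) *ᵥ
            (WithLp.equiv 2 (n → ℂ)) v) i) = (((c : ℂ) • vecMulVec φ (star φ)) *ᵥ
            (WithLp.equiv 2 (n → ℂ)) v) i from rfl, hmv i]
          ring
      _ = (c : ℂ) * ((∑ i, (starRingEnd ℂ) (v i) * φ i) * d) := by
          rw [Finset.sum_mul, Finset.mul_sum]
      _ = (c : ℂ) * ((starRingEnd ℂ) d * d) := by
          congr 2
          rw [hd]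
          simp only [dotProduct, Pi.star_apply, map_sum, _root_.map_mul, Complex.star_def,
            Complex.conj_conj]
          refine Finset.sum_congr rfl fun i _ => ?_
          rw [show ((WithLp.equiv 2 (n → ℂ)) v) i = v i from rfl]
          ring
  rw [quad, quad, map_add, LinearMap.add_apply, inner_add_right, Complex.add_re, key,
    Complex.conj_mul']
  congr 1
  rw [← Complex.ofReal_pow, ← Complex.ofReal_mul, Complex.ofReal_re]

lemma trace_cfc (A : Matrix n n ℂ) (hA : A.IsHermitian) (f : ℝ → ℝ) :
    (hA.cfc f).trace = ∑ i, (f (hA.eigenvalues i) : ℂ) := by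
  rw [Matrix.IsHermitian.cfc, Unitary.conjStarAlgAut_apply, Matrix.trace_mul_cycle]
  rw [show (star hA.eigenvectorUnitary : Matrix n n ℂ) * (hA.eigenvectorUnitary : Matrix n n ℂ)
    = 1 from Unitary.star_mul_self_of_mem (SetLike.coe_mem _), one_mul, trace_diagonal]
  rfl

lemma herm_pert (H₀ : Matrix n n ℂ) (hH₀ : H₀.IsHermitian) (φ : n → ℂ) (s : ℝ) :
    (H₀ + (s : ℂ) • vecMulVec φ (star φ)).IsHermitian := by
  apply hH₀.add
  rw [Matrix.IsHermitian]
  ext i j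
  simp [Matrix.conjTranspose_apply, vecMulVec_apply, Complex.conj_ofReal, mul_comm, mul_left_comm]
  ring

lemma trace_specProj_re (A : Matrix n n ℂ) (hA : A.IsHermitian) (a b : ℝ) :
    ((specProj A (Set.Ioc a b)).trace).re = (icount hA a b : ℝ) := by
  classical
  rw [specProj, dif_pos hA, trace_cfc A hA, Complex.re_sum]
  have h1 : ∀ i : n, ((Set.indicator (Set.Ioc a b) 1 (hA.eigenvalues i) : ℝ) : ℂ).re
      = if hA.eigenvalues i ∈ Set.Ioc a b then (1 : ℝ) else 0 := by
    intro i; rw [Set.indicator_apply]; split <;> simp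
  rw [Finset.sum_congr rfl fun i _ => h1 i, Finset.sum_boole, icount,
    Nat.card_eq_fintype_card, Fintype.card_subtype]

end RankOneAux

open RankOneAux in
/-- **Eigenvalue interlacing for rank-one perturbations:** for `H_s = H₀ + s Π_φ`,
`a < b` and `0 ≤ s ≤ t`, one has `tr χ_{(a,b]}(H_s) ≤ 1 + tr χ_{(a,b]}(H_t)`. -/
theorem interlacing_rank_one {n : Type*} [Fintype n] [DecidableEq n]
    (H₀ : Matrix n n ℂ) (hH₀ : H₀.IsHermitian)
    (φ : n → ℂ) (hφ : star φ ⬝ᵥ φ = 1)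
    (a b : ℝ) (hab : a < b) (s t : ℝ) (hs : 0 ≤ s) (hst : s ≤ t) :
    ((specProj (H₀ + (s : ℂ) • vecMulVec φ (star φ)) (Set.Ioc a b)).trace).re
      ≤ 1 + ((specProj (H₀ + (t : ℂ) • vecMulVec φ (star φ)) (Set.Ioc a b)).trace).re := by
  classical
  set P : Matrix n n ℂ := vecMulVec φ (star φ) with hP
  have hs' : (H₀ + (s : ℂ) • P).IsHermitian := herm_pert H₀ hH₀ φ s
  have ht' : (H₀ + (t : ℂ) • P).IsHermitian := herm_pert H₀ hH₀ φ t
  have hAt : H₀ + (t : ℂ) • P = (H₀ + (s : ℂ) • P) + ((t - s : ℝ) : ℂ) • P := by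
    push_cast
    rw [sub_smul]
    abel
  -- the linear functional v ↦ ⟨φ, v⟩
  let f : EuclideanSpace ℂ n →ₗ[ℂ] ℂ :=
    { toFun := fun v => star φ ⬝ᵥ (WithLp.equiv 2 (n → ℂ)) v
      map_add' := fun u w => by
        show star φ ⬝ᵥ ((WithLp.equiv 2 (n → ℂ)) u + (WithLp.equiv 2 (n → ℂ)) w) = _
        rw [dotProduct_add]
      map_smul' := fun c u => by
        show star φ ⬝ᵥ (c • (WithLp.equiv 2 (n → ℂ)) u) = _
        rw [dotProduct_smul]
        rfl }
  have hmono : ∀ v, quad (H₀ + (s : ℂ) • P) v ≤ quad (H₀ + (t : ℂ) • P) v := by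
    intro v
    rw [hAt, quad_add_rankone (H₀ + (s : ℂ) • P) φ (t - s) v]
    have h1 : 0 ≤ (t - s) * ‖star φ ⬝ᵥ (WithLp.equiv 2 (n → ℂ)) v‖ ^ 2 :=
      mul_nonneg (sub_nonneg.mpr hst) (by positivity)
    linarith
  have hker : ∀ v, f v = 0 → quad (H₀ + (s : ℂ) • P) v = quad (H₀ + (t : ℂ) • P) v := by
    intro v hv
    rw [hAt, quad_add_rankone (H₀ + (s : ℂ) • P) φ (t - s) v]
    have : star φ ⬝ᵥ (WithLp.equiv 2 (n → ℂ)) v = 0 := hv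
    rw [this]
    simp
  have m1 : ecount ht' a ≤ ecount hs' a := ecount_mono hs' ht' hmono a
  have r1 : ecount hs' b ≤ ecount ht' b + 1 := ecount_le_rankone hs' ht' f hker b
  have e1 : icount hs' a b + ecount hs' a = ecount hs' b := icount_add_ecount hs' hab.le
  have e2 : icount ht' a b + ecount ht' a = ecount ht' b := icount_add_ecount ht' hab.le
  have key : icount hs' a b ≤ 1 + icount ht' a b := by omega
  rw [trace_specProj_re _ hs', trace_specProj_re _ ht']
  exact_mod_cast key
end

section
/- Let Λ be a finite set, and for each j ∈ Λ let μ_j be a probability measure on ℝ. Let H_{0,Λ} be self-adjoint on ℓ²(Λ) and H_ω = H_{0,Λ} + Σ_{j∈Λ} ω_j Π_j, where the ω_j are independent with distributions μ_j and Π_j is the projection onto δ_j. Suppose each μ_j satisfies the spectral averaging bound ∫⟨δ_j, χ_I(H_{(ω_j^⊥,s)}) δ_j⟩ dμ_j(s) ≤ Q(|I|) for all bounded intervals I and all fixed ω_j^⊥. Then for every bounded interval I: E[tr χ_I(H_ω)] ≤ Q(|I|)·|Λ| (Wegner estimate). -/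
open Matrix MeasureTheory

/-- `I ⊆ ℝ` is a bounded interval. -/
def IsBoundedInterval (I : Set ℝ) : Prop :=
  Bornology.IsBounded I ∧ I.OrdConnected

/-- The generalized Anderson Hamiltonian `H_ω = H₀ + Σ_{j∈Λ} ω_j Π_j` on `ℓ²(Λ)`,
where `Π_j` is the orthogonal projection onto `δ_j`. -/
noncomputable def andersonH {Λ : Type*} [Fintype Λ] [DecidableEq Λ]
    (H₀ : Matrix Λ Λ ℂ) (ω : Λ → ℝ) : Matrix Λ Λ ℂ :=
  H₀ + Matrix.diagonal fun j => (ω j : ℂ)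

/-- The eigenvalue counting function `tr χ_I(H_ω)` (real-valued). -/
noncomputable def nEV {Λ : Type*} [Fintype Λ] [DecidableEq Λ]
    (H₀ : Matrix Λ Λ ℂ) (ω : Λ → ℝ) (I : Set ℝ) : ℝ :=
  ((specProj (andersonH H₀ ω) I).trace).re

section WegnerAux

open Filter

variable {Λ : Type*} [Fintype Λ] [DecidableEq Λ]

lemma wegner_diag_re (A : Matrix Λ Λ ℂ) (hA : A.IsHermitian) (f : ℝ → ℝ) (j : Λ) :
    ((hA.cfc f) j j).re =
      ∑ k, f (hA.eigenvalues k) *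
        Complex.normSq ((hA.eigenvectorUnitary : Matrix Λ Λ ℂ) j k) := by
  rw [Matrix.IsHermitian.cfc, Unitary.conjStarAlgAut_apply, Matrix.mul_apply, Complex.re_sum]
  refine Finset.sum_congr rfl fun k _ => ?_
  rw [Matrix.mul_diagonal, Matrix.star_apply]
  have hz : (hA.eigenvectorUnitary : Matrix Λ Λ ℂ) j k *
      (RCLike.ofReal ∘ f ∘ hA.eigenvalues) k *
      star ((hA.eigenvectorUnitary : Matrix Λ Λ ℂ) j k)
      = ((f (hA.eigenvalues k) * Complex.normSq ((hA.eigenvectorUnitary : Matrix Λ Λ ℂ) j k) : ℝ)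
        : ℂ) := by
    set z := (hA.eigenvectorUnitary : Matrix Λ Λ ℂ) j k
    have : z * (RCLike.ofReal ∘ f ∘ hA.eigenvalues) k * star z
        = ((f (hA.eigenvalues k) : ℂ)) * (z * star z) := by
      show z * ((f (hA.eigenvalues k) : ℝ) : ℂ) * star z = _
      ring
    rw [this, Complex.star_def, Complex.mul_conj]
    push_cast
    ring
  rw [hz, Complex.ofReal_re]

lemma wegner_sum_normSq (A : Matrix Λ Λ ℂ) (hA : A.IsHermitian) (j : Λ) :
    ∑ k, Complex.normSq ((hA.eigenvectorUnitary : Matrix Λ Λ ℂ) j k) = 1 := by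
  have h : (hA.eigenvectorUnitary : Matrix Λ Λ ℂ) * star (hA.eigenvectorUnitary : Matrix Λ Λ ℂ)
      = 1 := Unitary.coe_mul_star_self _
  have h2 := congrArg (fun M : Matrix Λ Λ ℂ => (M j j).re) h
  simpa [Matrix.mul_apply, Matrix.star_apply, Complex.star_def, Complex.mul_conj,
    Complex.re_sum, Matrix.one_apply_eq] using h2

lemma wegner_herm (H₀ : Matrix Λ Λ ℂ) (hH₀ : H₀.IsHermitian) (ω : Λ → ℝ) :
    (andersonH H₀ ω).IsHermitian := by
  refine hH₀.add ?_
  rw [Matrix.IsHermitian, Matrix.diagonal_conjTranspose]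
  have : (star fun j => ((ω j : ℂ))) = fun j => ((ω j : ℂ)) :=
    funext fun i => Complex.conj_ofReal (ω i)
  rw [this]

lemma wegner_cont_anderson (H₀ : Matrix Λ Λ ℂ) :
    Continuous fun ω : Λ → ℝ => andersonH H₀ ω := by
  unfold andersonH
  refine Continuous.add continuous_const ?_
  apply continuous_pi; intro i
  apply continuous_pi; intro l
  by_cases h : i = l
  · subst h
    simpa [Matrix.diagonal_apply_eq, Function.comp_def] using
      (Complex.continuous_ofReal.comp (continuous_apply i))
  · simp only [Matrix.diagonal_apply_ne _ h]
    exact continuous_const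

lemma wegner_cont_poly (H₀ : Matrix Λ Λ ℂ) (p : Polynomial ℝ) (j : Λ) :
    Continuous fun ω : Λ → ℝ => ((Polynomial.aeval (andersonH H₀ ω) p) j j).re := by
  apply Complex.continuous_re.comp
  have h1 : Continuous fun M : Matrix Λ Λ ℂ => Polynomial.aeval M p :=
    p.continuous_aeval
  have h2 : Continuous fun M : Matrix Λ Λ ℂ => M j j :=
    (continuous_apply j).comp (continuous_apply j)
  exact (h2.comp h1).comp (wegner_cont_anderson H₀)

lemma wegner_eig_bound (A : Matrix Λ Λ ℂ) (hA : A.IsHermitian) (k : Λ) :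
    |hA.eigenvalues k| ≤ ∑ i, ∑ l, ‖A i l‖ := by
  have h1 : hA.eigenvalues k ∈ spectrum ℝ A := hA.eigenvalues_mem_spectrum_real k
  rw [← spectrum.preimage_algebraMap ℂ] at h1
  have h2 : ((hA.eigenvalues k : ℂ)) ∈ spectrum ℂ A := h1
  have h3 : Matrix.toLin' A = Matrix.toLinAlgEquiv' A := by
    ext x i
    rfl
  have hev : Module.End.HasEigenvalue (Matrix.toLin' A) ((hA.eigenvalues k : ℂ)) := by
    rw [h3]
    exact Module.End.hasEigenvalue_iff_mem_spectrum.mpr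
      ((AlgEquiv.spectrum_eq Matrix.toLinAlgEquiv' A).symm ▸ h2)
  obtain ⟨i, hi⟩ := eigenvalue_mem_ball hev
  rw [Metric.mem_closedBall] at hi
  have habs : |hA.eigenvalues k| = ‖((hA.eigenvalues k : ℂ))‖ := by
    rw [Complex.norm_real, Real.norm_eq_abs]
  rw [habs]
  calc ‖((hA.eigenvalues k : ℂ))‖
      ≤ ‖A i i‖ + dist ((hA.eigenvalues k : ℂ)) (A i i) := by
        rw [dist_eq_norm]
        have := norm_add_le (A i i) ((hA.eigenvalues k : ℂ) - A i i)
        simpa using this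
    _ ≤ ‖A i i‖ + ∑ l ∈ Finset.univ.erase i, ‖A i l‖ := by linarith
    _ = ∑ l, ‖A i l‖ := Finset.add_sum_erase _ (fun l => ‖A i l‖) (Finset.mem_univ i)
    _ ≤ ∑ i, ∑ l, ‖A i l‖ :=
        Finset.single_le_sum (fun i _ => Finset.sum_nonneg fun l _ => norm_nonneg _)
          (Finset.mem_univ i)

lemma wegner_diag_sub_le (A : Matrix Λ Λ ℂ) (hA : A.IsHermitian) (j : Λ) (f g : ℝ → ℝ) (c : ℝ)
    (h : ∀ k, |f (hA.eigenvalues k) - g (hA.eigenvalues k)| ≤ c) :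
    |((hA.cfc f) j j).re - ((hA.cfc g) j j).re| ≤ c := by
  rw [wegner_diag_re, wegner_diag_re, ← Finset.sum_sub_distrib]
  calc |∑ k, (f (hA.eigenvalues k) *
          Complex.normSq ((hA.eigenvectorUnitary : Matrix Λ Λ ℂ) j k)
        - g (hA.eigenvalues k) *
          Complex.normSq ((hA.eigenvectorUnitary : Matrix Λ Λ ℂ) j k))|
      ≤ ∑ k, |f (hA.eigenvalues k) *
          Complex.normSq ((hA.eigenvectorUnitary : Matrix Λ Λ ℂ) j k)
        - g (hA.eigenvalues k) *
          Complex.normSq ((hA.eigenvectorUnitary : Matrix Λ Λ ℂ) j k)| :=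
        Finset.abs_sum_le_sum_abs _ _
    _ ≤ ∑ k, c * Complex.normSq ((hA.eigenvectorUnitary : Matrix Λ Λ ℂ) j k) := by
        refine Finset.sum_le_sum fun k _ => ?_
        rw [← sub_mul, abs_mul, abs_of_nonneg (Complex.normSq_nonneg _)]
        exact mul_le_mul_of_nonneg_right (h k) (Complex.normSq_nonneg _)
    _ = c := by rw [← Finset.mul_sum, wegner_sum_normSq, mul_one]

lemma wegner_meas_cont (H₀ : Matrix Λ Λ ℂ) (hH₀ : H₀.IsHermitian) (j : Λ)
    (f : ℝ → ℝ) (hf : Continuous f) :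
    Measurable fun ω : Λ → ℝ => (((wegner_herm H₀ hH₀ ω).cfc f) j j).re := by
  choose p hp using fun m : ℕ =>
    exists_polynomial_near_of_continuousOn (-(m + 1 : ℝ)) (m + 1) f hf.continuousOn
      (1 / (m + 1)) (by positivity)
  apply measurable_of_tendsto_metrizable
    (f := fun m ω => ((Polynomial.aeval (andersonH H₀ ω) (p m)) j j).re)
    (fun m => (wegner_cont_poly H₀ (p m) j).measurable)
  rw [tendsto_pi_nhds]
  intro ω
  set B : ℝ := ∑ i, ∑ l, ‖andersonH H₀ ω i l‖ with hB
  have key : ∀ m : ℕ, B ≤ m + 1 →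
      |((Polynomial.aeval (andersonH H₀ ω) (p m)) j j).re
        - (((wegner_herm H₀ hH₀ ω).cfc f) j j).re| ≤ 1 / (m + 1) := by
    intro m hm
    have hsa : IsSelfAdjoint (andersonH H₀ ω) := wegner_herm H₀ hH₀ ω
    have hpoly : (Polynomial.aeval (andersonH H₀ ω) (p m)) =
        (wegner_herm H₀ hH₀ ω).cfc ((p m).eval) := by
      rw [← Matrix.IsHermitian.cfc_eq]
      exact (cfc_polynomial (p m) (andersonH H₀ ω) hsa).symm
    rw [hpoly]
    refine wegner_diag_sub_le _ _ _ _ _ _ fun k => ?_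
    have hbd := wegner_eig_bound (andersonH H₀ ω) (wegner_herm H₀ hH₀ ω) k
    rw [← hB] at hbd
    have hmem : (wegner_herm H₀ hH₀ ω).eigenvalues k ∈ Set.Icc (-(m + 1 : ℝ)) (m + 1) := by
      rw [Set.mem_Icc, ← abs_le]
      exact hbd.trans hm
    exact (hp m _ hmem).le
  have hev : ∀ᶠ m : ℕ in Filter.atTop,
      dist ((Polynomial.aeval (andersonH H₀ ω) (p m)) j j).re
        (((wegner_herm H₀ hH₀ ω).cfc f) j j).re ≤ 1 / (m + 1) := by
    filter_upwards [Filter.eventually_ge_atTop ⌈B⌉₊] with m hm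
    rw [Real.dist_eq]
    refine key m ?_
    calc B ≤ (⌈B⌉₊ : ℝ) := Nat.le_ceil B
      _ ≤ (m : ℝ) := Nat.cast_le.2 hm
      _ ≤ m + 1 := by linarith
  rw [tendsto_iff_dist_tendsto_zero]
  exact squeeze_zero' (Filter.Eventually.of_forall fun m => dist_nonneg) hev
    tendsto_one_div_add_atTop_nhds_zero_nat

lemma wegner_diag_tendsto (A : Matrix Λ Λ ℂ) (hA : A.IsHermitian) (j : Λ)
    (f : ℝ → ℝ) (fn : ℕ → ℝ → ℝ)
    (h : ∀ x, Tendsto (fun n => fn n x) atTop (nhds (f x))) :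
    Tendsto (fun n => ((hA.cfc (fn n)) j j).re) atTop (nhds (((hA.cfc f) j j).re)) := by
  simp only [wegner_diag_re]
  exact tendsto_finset_sum _ fun k _ => (h _).mul_const _

lemma wegner_diag_nonneg (A : Matrix Λ Λ ℂ) (hA : A.IsHermitian) (j : Λ)
    (f : ℝ → ℝ) (h0 : ∀ x, 0 ≤ f x) : 0 ≤ ((hA.cfc f) j j).re := by
  rw [wegner_diag_re]
  exact Finset.sum_nonneg fun k _ => mul_nonneg (h0 _) (Complex.normSq_nonneg _)

lemma wegner_diag_le_one (A : Matrix Λ Λ ℂ) (hA : A.IsHermitian) (j : Λ)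
    (f : ℝ → ℝ) (h1 : ∀ x, f x ≤ 1) : ((hA.cfc f) j j).re ≤ 1 := by
  rw [wegner_diag_re]
  calc ∑ k, f (hA.eigenvalues k) *
        Complex.normSq ((hA.eigenvectorUnitary : Matrix Λ Λ ℂ) j k)
      ≤ ∑ k, 1 * Complex.normSq ((hA.eigenvectorUnitary : Matrix Λ Λ ℂ) j k) :=
        Finset.sum_le_sum fun k _ =>
          mul_le_mul_of_nonneg_right (h1 _) (Complex.normSq_nonneg _)
    _ = 1 := by
        simp only [one_mul]
        exact wegner_sum_normSq A hA j

end WegnerAux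

section WegnerSteps

open Filter

noncomputable def stepIci (a : ℝ) (n : ℕ) (x : ℝ) : ℝ := min 1 (max 0 (1 + n * (x - a)))
noncomputable def stepIoi (a : ℝ) (n : ℕ) (x : ℝ) : ℝ := min 1 (max 0 (n * (x - a)))
noncomputable def stepIic (b : ℝ) (n : ℕ) (x : ℝ) : ℝ := min 1 (max 0 (1 + n * (b - x)))
noncomputable def stepIio (b : ℝ) (n : ℕ) (x : ℝ) : ℝ := min 1 (max 0 (n * (b - x)))

lemma cont_stepIci (a : ℝ) (n : ℕ) : Continuous (stepIci a n) := by unfold stepIci; fun_prop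
lemma cont_stepIoi (a : ℝ) (n : ℕ) : Continuous (stepIoi a n) := by unfold stepIoi; fun_prop
lemma cont_stepIic (b : ℝ) (n : ℕ) : Continuous (stepIic b n) := by unfold stepIic; fun_prop
lemma cont_stepIio (b : ℝ) (n : ℕ) : Continuous (stepIio b n) := by unfold stepIio; fun_prop

lemma tendsto_stepIci (a x : ℝ) :
    Tendsto (fun n => stepIci a n x) atTop (nhds (Set.indicator (Set.Ici a) 1 x)) := by
  by_cases h : a ≤ x
  · have heq : ∀ n : ℕ, stepIci a n x = 1 := fun n => by
      have h1 : (0 : ℝ) ≤ (n : ℝ) * (x - a) := mul_nonneg (Nat.cast_nonneg n) (by linarith)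
      rw [stepIci, max_eq_right (by linarith), min_eq_left (by linarith)]
    rw [Set.indicator_of_mem (Set.mem_Ici.mpr h)]
    simp only [heq, Pi.one_apply]
    exact tendsto_const_nhds
  · push_neg at h
    rw [Set.indicator_of_notMem (by simpa [Set.mem_Ici] using not_le.mpr h)]
    refine Tendsto.congr' ?_ tendsto_const_nhds
    obtain ⟨N, hN⟩ := exists_nat_ge (1 / (a - x))
    filter_upwards [eventually_ge_atTop N] with n hn
    have hax : 0 < a - x := by linarith
    have h1 : 1 / (a - x) ≤ (n : ℝ) := le_trans hN (Nat.cast_le.2 hn)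
    have h2 : 1 ≤ (n : ℝ) * (a - x) := by rw [div_le_iff₀ hax] at h1; linarith
    have h3 : 1 + (n : ℝ) * (x - a) ≤ 0 := by nlinarith
    rw [stepIci, max_eq_left h3, min_eq_right (by norm_num)]

lemma tendsto_stepIoi (a x : ℝ) :
    Tendsto (fun n => stepIoi a n x) atTop (nhds (Set.indicator (Set.Ioi a) 1 x)) := by
  by_cases h : a < x
  · rw [Set.indicator_of_mem (Set.mem_Ioi.mpr h)]
    refine Tendsto.congr' ?_ tendsto_const_nhds
    obtain ⟨N, hN⟩ := exists_nat_ge (1 / (x - a))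
    filter_upwards [eventually_ge_atTop N] with n hn
    have hax : 0 < x - a := by linarith
    have h1 : 1 / (x - a) ≤ (n : ℝ) := le_trans hN (Nat.cast_le.2 hn)
    have h2 : 1 ≤ (n : ℝ) * (x - a) := by rw [div_le_iff₀ hax] at h1; linarith
    rw [Pi.one_apply, stepIoi, max_eq_right (by linarith), min_eq_left h2]
  · push_neg at h
    have heq : ∀ n : ℕ, stepIoi a n x = 0 := fun n => by
      have h1 : (n : ℝ) * (x - a) ≤ 0 :=
        mul_nonpos_of_nonneg_of_nonpos (Nat.cast_nonneg n) (by linarith)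
      rw [stepIoi, max_eq_left h1, min_eq_right (by norm_num)]
    rw [Set.indicator_of_notMem (by simpa [Set.mem_Ioi] using not_lt.mpr h)]
    simp only [heq]
    exact tendsto_const_nhds

lemma tendsto_stepIic (b x : ℝ) :
    Tendsto (fun n => stepIic b n x) atTop (nhds (Set.indicator (Set.Iic b) 1 x)) := by
  by_cases h : x ≤ b
  · have heq : ∀ n : ℕ, stepIic b n x = 1 := fun n => by
      have h1 : (0 : ℝ) ≤ (n : ℝ) * (b - x) := mul_nonneg (Nat.cast_nonneg n) (by linarith)
      rw [stepIic, max_eq_right (by linarith), min_eq_left (by linarith)]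
    rw [Set.indicator_of_mem (Set.mem_Iic.mpr h)]
    simp only [heq, Pi.one_apply]
    exact tendsto_const_nhds
  · push_neg at h
    rw [Set.indicator_of_notMem (by simpa [Set.mem_Iic] using not_le.mpr h)]
    refine Tendsto.congr' ?_ tendsto_const_nhds
    obtain ⟨N, hN⟩ := exists_nat_ge (1 / (x - b))
    filter_upwards [eventually_ge_atTop N] with n hn
    have hax : 0 < x - b := by linarith
    have h1 : 1 / (x - b) ≤ (n : ℝ) := le_trans hN (Nat.cast_le.2 hn)
    have h2 : 1 ≤ (n : ℝ) * (x - b) := by rw [div_le_iff₀ hax] at h1; linarith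
    have h3 : 1 + (n : ℝ) * (b - x) ≤ 0 := by nlinarith
    rw [stepIic, max_eq_left h3, min_eq_right (by norm_num)]

lemma tendsto_stepIio (b x : ℝ) :
    Tendsto (fun n => stepIio b n x) atTop (nhds (Set.indicator (Set.Iio b) 1 x)) := by
  by_cases h : x < b
  · rw [Set.indicator_of_mem (Set.mem_Iio.mpr h)]
    refine Tendsto.congr' ?_ tendsto_const_nhds
    obtain ⟨N, hN⟩ := exists_nat_ge (1 / (b - x))
    filter_upwards [eventually_ge_atTop N] with n hn
    have hax : 0 < b - x := by linarith
    have h1 : 1 / (b - x) ≤ (n : ℝ) := le_trans hN (Nat.cast_le.2 hn)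
    have h2 : 1 ≤ (n : ℝ) * (b - x) := by rw [div_le_iff₀ hax] at h1; linarith
    rw [Pi.one_apply, stepIio, max_eq_right (by linarith), min_eq_left h2]
  · push_neg at h
    have heq : ∀ n : ℕ, stepIio b n x = 0 := fun n => by
      have h1 : (n : ℝ) * (b - x) ≤ 0 :=
        mul_nonpos_of_nonneg_of_nonpos (Nat.cast_nonneg n) (by linarith)
      rw [stepIio, max_eq_left h1, min_eq_right (by norm_num)]
    rw [Set.indicator_of_notMem (by simpa [Set.mem_Iio] using not_lt.mpr h)]
    simp only [heq]
    exact tendsto_const_nhds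

lemma indicator_inter_min (S T : Set ℝ) (x : ℝ) :
    Set.indicator (S ∩ T) (1 : ℝ → ℝ) x
      = min (Set.indicator S (1 : ℝ → ℝ) x) (Set.indicator T (1 : ℝ → ℝ) x) := by
  by_cases hs : x ∈ S <;> by_cases ht : x ∈ T <;>
    simp [Set.indicator_apply, hs, ht, Set.mem_inter_iff]

lemma wegner_exists_seq (I : Set ℝ) (hI : I.OrdConnected) :
    ∃ fn : ℕ → ℝ → ℝ, (∀ n, Continuous (fn n)) ∧
      ∀ x, Tendsto (fun n => fn n x) atTop (nhds (Set.indicator I 1 x)) := by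
  have hmem := (isPreconnected_iff_ordConnected.mpr hI).mem_intervals
  simp only [Set.mem_insert_iff, Set.mem_singleton_iff] at hmem
  set a := sInf I
  set b := sSup I
  rcases hmem with h | h | h | h | h | h | h | h | h | h
  · exact ⟨fun n x => min (stepIci a n x) (stepIic b n x),
      fun n => (cont_stepIci a n).min (cont_stepIic b n),
      fun x => by
        rw [h, ← Set.Ici_inter_Iic, indicator_inter_min]
        exact (tendsto_stepIci a x).min (tendsto_stepIic b x)⟩
  · exact ⟨fun n x => min (stepIci a n x) (stepIio b n x),
      fun n => (cont_stepIci a n).min (cont_stepIio b n),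
      fun x => by
        rw [h, ← Set.Ici_inter_Iio, indicator_inter_min]
        exact (tendsto_stepIci a x).min (tendsto_stepIio b x)⟩
  · exact ⟨fun n x => min (stepIoi a n x) (stepIic b n x),
      fun n => (cont_stepIoi a n).min (cont_stepIic b n),
      fun x => by
        rw [h, ← Set.Ioi_inter_Iic, indicator_inter_min]
        exact (tendsto_stepIoi a x).min (tendsto_stepIic b x)⟩
  · exact ⟨fun n x => min (stepIoi a n x) (stepIio b n x),
      fun n => (cont_stepIoi a n).min (cont_stepIio b n),
      fun x => by
        rw [h, ← Set.Ioi_inter_Iio, indicator_inter_min]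
        exact (tendsto_stepIoi a x).min (tendsto_stepIio b x)⟩
  · exact ⟨fun n x => stepIci a n x, fun n => cont_stepIci a n,
      fun x => by rw [h]; exact tendsto_stepIci a x⟩
  · exact ⟨fun n x => stepIoi a n x, fun n => cont_stepIoi a n,
      fun x => by rw [h]; exact tendsto_stepIoi a x⟩
  · exact ⟨fun n x => stepIic b n x, fun n => cont_stepIic b n,
      fun x => by rw [h]; exact tendsto_stepIic b x⟩
  · exact ⟨fun n x => stepIio b n x, fun n => cont_stepIio b n,
      fun x => by rw [h]; exact tendsto_stepIio b x⟩
  · exact ⟨fun _ _ => 1, fun _ => continuous_const,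
      fun x => by rw [h]; simp [Set.indicator_univ]⟩
  · exact ⟨fun _ _ => 0, fun _ => continuous_const,
      fun x => by rw [h]; simp⟩

end WegnerSteps

lemma wegner_meas_indicator {Λ : Type*} [Fintype Λ] [DecidableEq Λ]
    (H₀ : Matrix Λ Λ ℂ) (hH₀ : H₀.IsHermitian) (I : Set ℝ) (hI : I.OrdConnected) (j : Λ) :
    Measurable fun ω : Λ → ℝ =>
      (((wegner_herm H₀ hH₀ ω).cfc (Set.indicator I 1)) j j).re := by
  obtain ⟨fn, hcont, hlim⟩ := wegner_exists_seq I hI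
  apply measurable_of_tendsto_metrizable
    (f := fun n ω => (((wegner_herm H₀ hH₀ ω).cfc (fn n)) j j).re)
    (fun n => wegner_meas_cont H₀ hH₀ j (fn n) (hcont n))
  rw [tendsto_pi_nhds]
  intro ω
  exact wegner_diag_tendsto _ _ j _ fn hlim
lemma wegner_integral_update_le {Λ : Type*} [Fintype Λ] [DecidableEq Λ]
    (μ : Λ → Measure ℝ) [∀ j, IsProbabilityMeasure (μ j)]
    (g : (Λ → ℝ) → ℝ) (hg : Integrable g (Measure.pi μ)) (hg0 : ∀ ω, 0 ≤ g ω)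
    (j : Λ) (c : ℝ)
    (h : ∀ ω : Λ → ℝ, ∫ s, g (Function.update ω j s) ∂(μ j) ≤ c) :
    ∫ ω, g ω ∂(Measure.pi μ) ≤ c := by
  classical
  haveI : Unique {i : Λ // i = j} :=
    ⟨⟨⟨j, rfl⟩⟩, fun i => Subtype.ext i.2⟩
  set e := MeasurableEquiv.piEquivPiSubtypeProd (fun _ : Λ => ℝ) (fun i => i = j) with he
  have hmp := measurePreserving_piEquivPiSubtypeProd (fun i : Λ => μ i) (fun i : Λ => i = j)
  have h1 := hmp.integral_comp' (g := fun z => g (e.symm z))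
  have h1' : (∫ x, (fun z => g (e.symm z))
      (MeasurableEquiv.piEquivPiSubtypeProd (fun _ : Λ => ℝ) (fun i => i = j) x)
        ∂(Measure.pi fun i => μ i)) = ∫ ω, g ω ∂(Measure.pi μ) := by
    refine integral_congr_ae (ae_of_all _ fun ω => ?_)
    exact congrArg g (e.symm_apply_apply ω)
  rw [h1'] at h1
  have hfun : ((fun z => g (e.symm z)) ∘
      ⇑(MeasurableEquiv.piEquivPiSubtypeProd (fun _ : Λ => ℝ) (fun i => i = j))) = g :=
    funext fun ω => congrArg g (e.symm_apply_apply ω)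
  have hint := (hmp.integrable_comp_emb (MeasurableEquiv.measurableEmbedding _)).mp
    (by rw [hfun]; exact hg)
  refine h1.trans_le ?_
  rw [integral_prod_symm _ hint]
  refine le_trans (integral_mono_of_nonneg
      (ae_of_all _ fun y => integral_nonneg fun x => hg0 _)
      (integrable_const c) (ae_of_all _ fun y => ?_)) (by simp)
  -- inner integral bound
  set eu := MeasurableEquiv.piUnique (fun _ : {i : Λ // i = j} => ℝ) with heu
  have hu := measurePreserving_piUnique (fun i : {i : Λ // i = j} => μ i)
  have hdef : μ ((default : {i : Λ // i = j}) : Λ) = μ j :=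
    congrArg μ (default : {i : Λ // i = j}).2
  rw [hdef] at hu
  have h0 := hu.integral_comp' (g := fun s => g (e.symm (eu.symm s, y)))
  have h0' : (∫ x, (fun s => g (e.symm (eu.symm s, y))) (eu x)
      ∂(Measure.pi fun i : {i : Λ // i = j} => μ i))
      = ∫ x, g (e.symm (x, y)) ∂(Measure.pi fun i : {i : Λ // i = j} => μ i) := by
    refine integral_congr_ae (ae_of_all _ fun x => ?_)
    exact congrArg g (congrArg _ (congrArg (fun t => (t, y)) (eu.symm_apply_apply x)))
  rw [h0'] at h0
  set ω₀ : Λ → ℝ := e.symm (eu.symm 0, y) with hω₀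
  have h3 : ∀ s : ℝ, e.symm (eu.symm s, y) = Function.update ω₀ j s := by
    intro s
    funext i
    by_cases hij : i = j
    · subst hij
      simp [hω₀, he, heu, MeasurableEquiv.piEquivPiSubtypeProd,
        MeasurableEquiv.piUnique, Equiv.piEquivPiSubtypeProd,
        Equiv.piUnique, Function.update]
    · simp [hω₀, he, heu, MeasurableEquiv.piEquivPiSubtypeProd,
        MeasurableEquiv.piUnique, Equiv.piEquivPiSubtypeProd,
        Equiv.piUnique, Function.update, hij]
  beta_reduce
  refine le_trans (le_of_eq ?_) (h ω₀)
  have h3' : (fun s => g (e.symm (eu.symm s, y))) = fun s => g (Function.update ω₀ j s) :=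
    funext fun s => congrArg g (h3 s)
  rw [← h3', ← h0]
  congr!

/-- **Wegner estimate** for the generalized Anderson model: if each single-site measure
satisfies the spectral averaging bound with function `Q`, then
`E[tr χ_I(H_ω)] ≤ Q(|I|)·|Λ|` for every bounded interval `I`. -/
theorem wegner_estimate {Λ : Type*} [Fintype Λ] [DecidableEq Λ]
    (H₀ : Matrix Λ Λ ℂ) (hH₀ : H₀.IsHermitian)
    (μ : Λ → Measure ℝ) [∀ j, IsProbabilityMeasure (μ j)]
    (Q : ℝ → ℝ) (hQmono : Monotone Q) (hQ0 : ∀ s, 0 ≤ Q s)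
    (hSA : ∀ I : Set ℝ, IsBoundedInterval I → ∀ j : Λ, ∀ ω : Λ → ℝ,
      ∫ s : ℝ, ((specProj (andersonH H₀ (Function.update ω j s)) I) j j).re ∂(μ j)
        ≤ Q ((volume I).toReal))
    (I : Set ℝ) (hI : IsBoundedInterval I) :
    ∫ ω, nEV H₀ ω I ∂(Measure.pi μ) ≤ Q ((volume I).toReal) * Fintype.card Λ := by
  classical
  have hherm : ∀ ω : Λ → ℝ, (andersonH H₀ ω).IsHermitian := wegner_herm H₀ hH₀
  have hspec : ∀ ω : Λ → ℝ, specProj (andersonH H₀ ω) I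
      = (hherm ω).cfc (Set.indicator I 1) := fun ω => dif_pos (hherm ω)
  set g : Λ → (Λ → ℝ) → ℝ := fun j ω => ((specProj (andersonH H₀ ω) I) j j).re with hgdef
  have hgeq : ∀ (j : Λ) (ω : Λ → ℝ),
      g j ω = (((hherm ω).cfc (Set.indicator I 1)) j j).re := by
    intro j ω
    rw [hgdef]
    simp only [hspec]
  have hind0 : ∀ x : ℝ, 0 ≤ Set.indicator I (1 : ℝ → ℝ) x := fun x => by
    by_cases hx : x ∈ I <;> simp [hx]
  have hind1 : ∀ x : ℝ, Set.indicator I (1 : ℝ → ℝ) x ≤ 1 := fun x => by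
    by_cases hx : x ∈ I <;> simp [hx]
  have hmeas : ∀ j, Measurable (g j) := by
    intro j
    have := wegner_meas_indicator H₀ hH₀ I hI.2 j
    have hfe : (fun ω : Λ → ℝ => (((wegner_herm H₀ hH₀ ω).cfc (Set.indicator I 1)) j j).re)
        = g j := funext fun ω => (hgeq j ω).symm
    rwa [hfe] at this
  have hg0 : ∀ j ω, 0 ≤ g j ω := fun j ω => by
    rw [hgeq]
    exact wegner_diag_nonneg _ _ j _ hind0
  have hg1 : ∀ j ω, g j ω ≤ 1 := fun j ω => by
    rw [hgeq]
    exact wegner_diag_le_one _ _ j _ hind1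
  have hint : ∀ j, Integrable (g j) (Measure.pi μ) := by
    intro j
    refine ⟨(hmeas j).aestronglyMeasurable, ?_⟩
    refine HasFiniteIntegral.of_bounded (C := 1) (ae_of_all _ fun ω => ?_)
    rw [Real.norm_eq_abs, abs_of_nonneg (hg0 j ω)]
    exact hg1 j ω
  have hnEV : ∀ ω, nEV H₀ ω I = ∑ j, g j ω := by
    intro ω
    rw [nEV, Matrix.trace, Complex.re_sum]
    rfl
  calc ∫ ω, nEV H₀ ω I ∂(Measure.pi μ)
      = ∑ j, ∫ ω, g j ω ∂(Measure.pi μ) := by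
        simp_rw [hnEV]
        exact integral_finset_sum _ fun j _ => hint j
    _ ≤ ∑ _j : Λ, Q ((volume I).toReal) := by
        refine Finset.sum_le_sum fun j _ => ?_
        refine wegner_integral_update_le μ (g j) (hint j) (hg0 j) j _ fun ω => ?_
        exact hSA I hI j ω
    _ = Q ((volume I).toReal) * Fintype.card Λ := by
        rw [Finset.sum_const, Finset.card_univ, nsmul_eq_mul, mul_comm]
end
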